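/- Suppose $H = (V_1 \cup V_2 \cup V_3, E)$ is a tripartite $3$-uniform hypergraph, $0 < \epsilon < 1/100$, and suppose that at least $(1 - 3\epsilon^{1/2})|V_1||V_2|$ pairs $(x,y) \in V_1 \times V_2$ satisfy $|N_H(xy)|/|V_3| \in [0,\epsilon) \cup (1-\epsilon,1]$, and similarly for the pairs from $V_1 \times V_3$ and $V_2 \times V_3$. Then there exists a set $V_1' \subseteq V_1$ with $|V_1'| \geq (1 - 2\epsilon^{1/2})|V_1|$ such that for every $x \in V_1'$, either $|N_H(x)| \geq (1 - 2\epsilon^{1/4})|V_2||V_3|$ or $|N_H(x)| \leq 2\epsilon^{1/4}|V_2||V_3|$, where $N_H(x) = \{(y,z) \in V_2 \times V_3 : xyz \in E\}$. -/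

import Mathlib

open scoped Classical
open Finset

private lemma card_filter_prod_left {β γ : Type*} (A : Finset β) (B : Finset γ)
    (P : β → γ → Prop) [DecidablePred (fun p : β × γ => P p.1 p.2)]
    [∀ a, DecidablePred (P a)] :
    (((A ×ˢ B).filter fun p => P p.1 p.2).card : ℝ) =
      ∑ a ∈ A, ((B.filter fun b => P a b).card : ℝ) := by
  have h : ((A ×ˢ B).filter fun p => P p.1 p.2).card
      = ∑ a ∈ A, (B.filter fun b => P a b).card := by
    rw [Finset.card_filter, Finset.sum_product]
    simp only [Finset.card_filter]
  rw [h]; push_cast; ring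

private lemma card_filter_prod_right {β γ : Type*} (A : Finset β) (B : Finset γ)
    (P : β → γ → Prop) [DecidablePred (fun p : β × γ => P p.1 p.2)]
    [∀ b, DecidablePred (fun a => P a b)] :
    (((A ×ˢ B).filter fun p => P p.1 p.2).card : ℝ) =
      ∑ b ∈ B, ((A.filter fun a => P a b).card : ℝ) := by
  have h : ((A ×ˢ B).filter fun p => P p.1 p.2).card
      = ∑ b ∈ B, (A.filter fun a => P a b).card := by
    rw [Finset.card_filter, Finset.sum_product_right]
    simp only [Finset.card_filter]
  rw [h]; push_cast; ring

private lemma markov {β : Type*} (V T : Finset β) (hTV : T ⊆ V) (f : β → ℝ)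
    (hf : ∀ x ∈ V, 0 ≤ f x) (τ : ℝ) (hτ : ∀ x ∈ T, τ ≤ f x) :
    (T.card : ℝ) * τ ≤ ∑ x ∈ V, f x := by
  calc (T.card : ℝ) * τ = T.card • τ := by simp [nsmul_eq_mul]
  _ ≤ ∑ x ∈ T, f x := Finset.card_nsmul_le_sum T f τ hτ
  _ ≤ ∑ x ∈ V, f x := Finset.sum_le_sum_of_subset_of_nonneg hTV (fun x hx _ => hf x hx)

private lemma sum_le_bound {β : Type*} (T : Finset β) (f : β → ℝ) (c : ℝ)
    (h : ∀ x ∈ T, f x ≤ c) : ∑ x ∈ T, f x ≤ (T.card : ℝ) * c := by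
  calc ∑ x ∈ T, f x ≤ T.card • c := Finset.sum_le_card_nsmul T f c h
  _ = (T.card : ℝ) * c := by simp [nsmul_eq_mul]

set_option maxHeartbeats 1600000 in
private lemma perx_arith (ε m2 m3 ℓ d2 s2 d3 s3 : ℝ) (hε0 : 0 < ε)
    (hm2p : 0 < m2) (hm3p : 0 < m3)
    (L2 : d2 * ((1-ε)*m3) ≤ ℓ) (L3 : d3 * ((1-ε)*m2) ≤ ℓ)
    (R2 : s2 * ((1-ε)*m3) ≤ m2*m3 - ℓ) (R3 : s3 * ((1-ε)*m2) ≤ m2*m3 - ℓ)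
    (X23 : d2 * (s3 - ε*m3) ≤ ε*m2*s3) (X32 : d3 * (s2 - ε*m2) ≤ ε*m3*s2)
    (hb2 : d2 + s2 ≤ m2) (hb3 : d3 + s3 ≤ m3)
    (hd20 : 0 ≤ d2) (hs20 : 0 ≤ s2) (hd30 : 0 ≤ d3) (hs30 : 0 ≤ s3) :
    2 * min ℓ (m2*m3 - ℓ) ≤ (m2 - d2 - s2)*m3 + (m3 - d3 - s3)*m2 + 6*ε*(m2*m3) := by
  have hM1 : min ℓ (m2*m3 - ℓ) ≤ ℓ := min_le_left _ _
  have hM2 : min ℓ (m2*m3 - ℓ) ≤ m2*m3 - ℓ := min_le_right _ _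
  have hεm23 : 0 < ε*(m2*m3) := mul_pos hε0 (mul_pos hm2p hm3p)
  rcases le_or_gt (2*ε*m2) d2 with hd2 | hd2
  · rcases le_or_gt (2*ε*m3) d3 with hd3 | hd3
    · -- Case 1
      have hs3 : s3 ≤ 2*ε*m3 := by
        by_contra hcon
        push_neg at hcon
        have h1 : 0 < s3 - ε*m3 := by linarith [mul_pos hε0 hm3p]
        have h2 : (2*ε*m2) * (s3 - ε*m3) ≤ d2 * (s3 - ε*m3) :=
          mul_le_mul_of_nonneg_right hd2 h1.le
        have h3 : (ε*m2)*(2*ε*m3) < (ε*m2)*s3 :=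
          mul_lt_mul_of_pos_left hcon (mul_pos hε0 hm2p)
        nlinarith [h2, X23, h3]
      have hs2 : s2 ≤ 2*ε*m2 := by
        by_contra hcon
        push_neg at hcon
        have h1 : 0 < s2 - ε*m2 := by linarith [mul_pos hε0 hm2p]
        have h2 : (2*ε*m3) * (s2 - ε*m2) ≤ d3 * (s2 - ε*m2) :=
          mul_le_mul_of_nonneg_right hd3 h1.le
        have h3 : (ε*m3)*(2*ε*m2) < (ε*m3)*s2 :=
          mul_lt_mul_of_pos_left hcon (mul_pos hε0 hm3p)
        nlinarith [h2, X32, h3]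
      have k2 : ε*(d2*m3) ≤ ε*(m2*m3) :=
        mul_le_mul_of_nonneg_left
          (mul_le_mul_of_nonneg_right (show d2 ≤ m2 by linarith) hm3p.le) hε0.le
      have k3 : ε*(d3*m2) ≤ ε*(m3*m2) :=
        mul_le_mul_of_nonneg_left
          (mul_le_mul_of_nonneg_right (show d3 ≤ m3 by linarith) hm2p.le) hε0.le
      have j2 : s2*m3 ≤ (2*ε*m2)*m3 := mul_le_mul_of_nonneg_right hs2 hm3p.le
      have j3 : s3*m2 ≤ (2*ε*m3)*m2 := mul_le_mul_of_nonneg_right hs3 hm2p.le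
      have e2 : min ℓ (m2*m3 - ℓ) ≤ (m2 - d2 - s2) * m3 + 3*ε*(m2*m3) := by
        nlinarith [hM2, L2, k2, j2]
      have e3 : min ℓ (m2*m3 - ℓ) ≤ (m3 - d3 - s3) * m2 + 3*ε*(m2*m3) := by
        nlinarith [hM2, L3, k3, j3]
      linarith
    · -- Case 3
      have hs3 : s3 ≤ 2*ε*m3 := by
        by_contra hcon
        push_neg at hcon
        have h1 : 0 < s3 - ε*m3 := by linarith [mul_pos hε0 hm3p]
        have h2 : (2*ε*m2) * (s3 - ε*m3) ≤ d2 * (s3 - ε*m3) :=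
          mul_le_mul_of_nonneg_right hd2 h1.le
        have h3 : (ε*m2)*(2*ε*m3) < (ε*m2)*s3 :=
          mul_lt_mul_of_pos_left hcon (mul_pos hε0 hm2p)
        nlinarith [h2, X23, h3]
      have hbig : (1 - 4*ε) * (m2*m3) ≤ (m3 - d3 - s3) * m2 := by
        have := mul_le_mul_of_nonneg_right (show d3 + s3 ≤ 4*ε*m3 by linarith) hm2p.le
        nlinarith [this]
      have hb2m : 0 ≤ (m2 - d2 - s2) * m3 := by
        apply mul_nonneg _ hm3p.le; linarith
      nlinarith [hM1, hM2, hbig, hb2m, hεm23]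
  · rcases le_or_gt (2*ε*m3) d3 with hd3 | hd3
    · -- Case 4
      have hs2 : s2 ≤ 2*ε*m2 := by
        by_contra hcon
        push_neg at hcon
        have h1 : 0 < s2 - ε*m2 := by linarith [mul_pos hε0 hm2p]
        have h2 : (2*ε*m3) * (s2 - ε*m2) ≤ d3 * (s2 - ε*m2) :=
          mul_le_mul_of_nonneg_right hd3 h1.le
        have h3 : (ε*m3)*(2*ε*m2) < (ε*m3)*s2 :=
          mul_lt_mul_of_pos_left hcon (mul_pos hε0 hm3p)
        nlinarith [h2, X32, h3]
      have hbig : (1 - 4*ε) * (m2*m3) ≤ (m2 - d2 - s2) * m3 := by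
        have := mul_le_mul_of_nonneg_right (show d2 + s2 ≤ 4*ε*m2 by linarith) hm3p.le
        nlinarith [this]
      have hb3m : 0 ≤ (m3 - d3 - s3) * m2 := by
        apply mul_nonneg _ hm2p.le; linarith
      nlinarith [hM1, hM2, hbig, hb3m, hεm23]
    · -- Case 2
      have k2 : ε*(s2*m3) ≤ ε*(m2*m3) :=
        mul_le_mul_of_nonneg_left
          (mul_le_mul_of_nonneg_right (show s2 ≤ m2 by linarith) hm3p.le) hε0.le
      have k3 : ε*(s3*m2) ≤ ε*(m3*m2) :=
        mul_le_mul_of_nonneg_left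
          (mul_le_mul_of_nonneg_right (show s3 ≤ m3 by linarith) hm2p.le) hε0.le
      have j2 : d2*m3 ≤ (2*ε*m2)*m3 := mul_le_mul_of_nonneg_right hd2.le hm3p.le
      have j3 : d3*m2 ≤ (2*ε*m3)*m2 := mul_le_mul_of_nonneg_right hd3.le hm2p.le
      have e2 : min ℓ (m2*m3 - ℓ) ≤ (m2 - d2 - s2) * m3 + 3*ε*(m2*m3) := by
        nlinarith [hM1, R2, k2, j2]
      have e3 : min ℓ (m2*m3 - ℓ) ≤ (m3 - d3 - s3) * m2 + 3*ε*(m2*m3) := by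
        nlinarith [hM1, R3, k3, j3]
      linarith

set_option maxHeartbeats 1600000 in
private lemma key_perx {α : Type*} [DecidableEq α] {ε : ℝ} (hε0 : 0 < ε) (hε2 : ε < 1/2)
    (V2 V3 : Finset α) (h2 : V2.Nonempty) (h3 : V3.Nonempty)
    (Q : α → α → Prop) :
    2 * min (((V2 ×ˢ V3).filter fun p => Q p.1 p.2).card : ℝ)
        ((V2.card : ℝ) * (V3.card : ℝ) - (((V2 ×ˢ V3).filter fun p => Q p.1 p.2).card : ℝ)) ≤
      ((V2.card : ℝ)
        - ((V2.filter fun y => (1-ε) * (V3.card : ℝ) < ((V3.filter fun z => Q y z).card : ℝ)).card : ℝ)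
        - ((V2.filter fun y => ((V3.filter fun z => Q y z).card : ℝ) < ε * (V3.card : ℝ)).card : ℝ)) * (V3.card : ℝ)
      + ((V3.card : ℝ)
        - ((V3.filter fun z => (1-ε) * (V2.card : ℝ) < ((V2.filter fun y => Q y z).card : ℝ)).card : ℝ)
        - ((V3.filter fun z => ((V2.filter fun y => Q y z).card : ℝ) < ε * (V2.card : ℝ)).card : ℝ)) * (V2.card : ℝ)
      + 6 * ε * ((V2.card : ℝ) * (V3.card : ℝ)) := by
  classical
  set m2 := (V2.card : ℝ) with hm2
  set m3 := (V3.card : ℝ) with hm3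
  have hm2p : 0 < m2 := by rw [hm2]; exact_mod_cast Finset.card_pos.mpr h2
  have hm3p : 0 < m3 := by rw [hm3]; exact_mod_cast Finset.card_pos.mpr h3
  set r : α → ℝ := fun y => ((V3.filter fun z => Q y z).card : ℝ) with hr
  set c : α → ℝ := fun z => ((V2.filter fun y => Q y z).card : ℝ) with hc
  set D2 := V2.filter fun y => (1-ε) * m3 < r y with hD2
  set S2 := V2.filter fun y => r y < ε * m3 with hS2
  set D3 := V3.filter fun z => (1-ε) * m2 < c z with hD3
  set S3 := V3.filter fun z => c z < ε * m2 with hS3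
  set L := (V2 ×ˢ V3).filter fun p => Q p.1 p.2 with hL
  set ℓ := (L.card : ℝ) with hℓ
  have hr0 : ∀ y, 0 ≤ r y := by
    intro y; simp only [hr]; positivity
  have hrle : ∀ y, r y ≤ m3 := by
    intro y; simp only [hr, hm3]
    exact_mod_cast Finset.card_le_card (Finset.filter_subset _ _)
  have hc0 : ∀ z, 0 ≤ c z := by
    intro z; simp only [hc]; positivity
  have hcle : ∀ z, c z ≤ m2 := by
    intro z; simp only [hc, hm2]
    exact_mod_cast Finset.card_le_card (Finset.filter_subset _ _)
  have hsumL : ℓ = ∑ y ∈ V2, r y := by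
    rw [hℓ, hL, hr]; exact card_filter_prod_left V2 V3 Q
  have hsumL' : ℓ = ∑ z ∈ V3, c z := by
    rw [hℓ, hL, hc]; exact card_filter_prod_right V2 V3 Q
  have L2 : (D2.card : ℝ) * ((1-ε) * m3) ≤ ℓ := by
    rw [hsumL]
    refine markov V2 D2 (hD2 ▸ Finset.filter_subset _ _) r (fun y _ => hr0 y) _ ?_
    intro y hy
    rw [hD2] at hy
    exact (Finset.mem_filter.mp hy).2.le
  have L3 : (D3.card : ℝ) * ((1-ε) * m2) ≤ ℓ := by
    rw [hsumL']
    refine markov V3 D3 (hD3 ▸ Finset.filter_subset _ _) c (fun z _ => hc0 z) _ ?_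
    intro z hz
    rw [hD3] at hz
    exact (Finset.mem_filter.mp hz).2.le
  have R2 : (S2.card : ℝ) * ((1-ε) * m3) ≤ m2 * m3 - ℓ := by
    have hsub : m2 * m3 - ℓ = ∑ y ∈ V2, (m3 - r y) := by
      rw [hsumL, Finset.sum_sub_distrib, Finset.sum_const, nsmul_eq_mul, ← hm2]
    rw [hsub]
    refine markov V2 S2 (hS2 ▸ Finset.filter_subset _ _) _ (fun y _ => by linarith [hrle y]) _ ?_
    intro y hy
    rw [hS2] at hy
    have := (Finset.mem_filter.mp hy).2
    linarith
  have R3 : (S3.card : ℝ) * ((1-ε) * m2) ≤ m2 * m3 - ℓ := by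
    have hsub : m2 * m3 - ℓ = ∑ z ∈ V3, (m2 - c z) := by
      rw [hsumL', Finset.sum_sub_distrib, Finset.sum_const, nsmul_eq_mul, ← hm3]
      ring
    rw [hsub]
    refine markov V3 S3 (hS3 ▸ Finset.filter_subset _ _) _ (fun z _ => by linarith [hcle z]) _ ?_
    intro z hz
    rw [hS3] at hz
    have := (Finset.mem_filter.mp hz).2
    linarith
  have X23 : (D2.card : ℝ) * ((S3.card : ℝ) - ε * m3) ≤ ε * m2 * (S3.card : ℝ) := by
    have hT1 : (((D2 ×ˢ S3).filter fun p => Q p.1 p.2).card : ℝ)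
        = ∑ y ∈ D2, ((S3.filter fun z => Q y z).card : ℝ) := card_filter_prod_left D2 S3 Q
    have low : (D2.card : ℝ) * ((S3.card : ℝ) - ε * m3)
        ≤ (((D2 ×ˢ S3).filter fun p => Q p.1 p.2).card : ℝ) := by
      rw [hT1]
      refine markov D2 D2 Finset.Subset.rfl _ (fun y _ => Nat.cast_nonneg _) _ ?_
      intro y hy
      rw [hD2] at hy
      have hy' : (1-ε) * m3 < r y := (Finset.mem_filter.mp hy).2
      have split : (S3.filter fun z => Q y z).card + (S3.filter fun z => ¬ Q y z).card = S3.card :=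
        Finset.card_filter_add_card_filter_not _
      have hsub : (S3.filter fun z => ¬ Q y z) ⊆ (V3.filter fun z => ¬ Q y z) :=
        Finset.filter_subset_filter _ (hS3 ▸ Finset.filter_subset _ _)
      have hneg : ((V3.filter fun z => ¬ Q y z).card : ℝ) = m3 - r y := by
        have h := Finset.card_filter_add_card_filter_not (s := V3) (p := fun z => Q y z)
        simp only [hr, hm3]
        have h' : ((V3.filter fun z => Q y z).card : ℝ) + ((V3.filter fun z => ¬ Q y z).card : ℝ)
            = (V3.card : ℝ) := by exact_mod_cast congrArg (Nat.cast : ℕ → ℝ) h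
        linarith
      have hle : ((S3.filter fun z => ¬ Q y z).card : ℝ) ≤ m3 - r y := by
        rw [← hneg]; exact_mod_cast Finset.card_le_card hsub
      have hsplit' : ((S3.filter fun z => Q y z).card : ℝ) + ((S3.filter fun z => ¬ Q y z).card : ℝ)
          = (S3.card : ℝ) := by exact_mod_cast congrArg (Nat.cast : ℕ → ℝ) split
      linarith
    have up : (((D2 ×ˢ S3).filter fun p => Q p.1 p.2).card : ℝ) ≤ (S3.card : ℝ) * (ε * m2) := by
      rw [card_filter_prod_right D2 S3 Q]
      refine sum_le_bound S3 _ _ ?_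
      intro z hz
      rw [hS3] at hz
      have hz' : c z < ε * m2 := (Finset.mem_filter.mp hz).2
      have hDc : ((D2.filter fun y => Q y z).card : ℝ) ≤ c z := by
        simp only [hc]
        exact_mod_cast Finset.card_le_card
          (Finset.filter_subset_filter _ (hD2 ▸ Finset.filter_subset _ _))
      linarith
    linarith
  have X32 : (D3.card : ℝ) * ((S2.card : ℝ) - ε * m2) ≤ ε * m3 * (S2.card : ℝ) := by
    have hT1 : (((S2 ×ˢ D3).filter fun p => Q p.1 p.2).card : ℝ)
        = ∑ z ∈ D3, ((S2.filter fun y => Q y z).card : ℝ) := card_filter_prod_right S2 D3 Q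
    have low : (D3.card : ℝ) * ((S2.card : ℝ) - ε * m2)
        ≤ (((S2 ×ˢ D3).filter fun p => Q p.1 p.2).card : ℝ) := by
      rw [hT1]
      refine markov D3 D3 Finset.Subset.rfl _ (fun z _ => Nat.cast_nonneg _) _ ?_
      intro z hz
      rw [hD3] at hz
      have hz' : (1-ε) * m2 < c z := (Finset.mem_filter.mp hz).2
      have split : (S2.filter fun y => Q y z).card + (S2.filter fun y => ¬ Q y z).card = S2.card :=
        Finset.card_filter_add_card_filter_not _
      have hsub : (S2.filter fun y => ¬ Q y z) ⊆ (V2.filter fun y => ¬ Q y z) :=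
        Finset.filter_subset_filter _ (hS2 ▸ Finset.filter_subset _ _)
      have hneg : ((V2.filter fun y => ¬ Q y z).card : ℝ) = m2 - c z := by
        have h := Finset.card_filter_add_card_filter_not (s := V2) (p := fun y => Q y z)
        simp only [hc, hm2]
        have h' : ((V2.filter fun y => Q y z).card : ℝ) + ((V2.filter fun y => ¬ Q y z).card : ℝ)
            = (V2.card : ℝ) := by exact_mod_cast congrArg (Nat.cast : ℕ → ℝ) h
        linarith
      have hle : ((S2.filter fun y => ¬ Q y z).card : ℝ) ≤ m2 - c z := by
        rw [← hneg]; exact_mod_cast Finset.card_le_card hsub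
      have hsplit' : ((S2.filter fun y => Q y z).card : ℝ) + ((S2.filter fun y => ¬ Q y z).card : ℝ)
          = (S2.card : ℝ) := by exact_mod_cast congrArg (Nat.cast : ℕ → ℝ) split
      linarith
    have up : (((S2 ×ˢ D3).filter fun p => Q p.1 p.2).card : ℝ) ≤ (S2.card : ℝ) * (ε * m3) := by
      rw [card_filter_prod_left S2 D3 Q]
      refine sum_le_bound S2 _ _ ?_
      intro y hy
      rw [hS2] at hy
      have hy' : r y < ε * m3 := (Finset.mem_filter.mp hy).2
      have hDc : ((D3.filter fun z => Q y z).card : ℝ) ≤ r y := by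
        simp only [hr]
        exact_mod_cast Finset.card_le_card
          (Finset.filter_subset_filter _ (hD3 ▸ Finset.filter_subset _ _))
      linarith
    linarith
  have hdisj2 : Disjoint D2 S2 := by
    rw [Finset.disjoint_left]
    intro y h1 h2'
    rw [hD2] at h1; rw [hS2] at h2'
    have a1 := (Finset.mem_filter.mp h1).2
    have a2 := (Finset.mem_filter.mp h2').2
    nlinarith
  have hdisj3 : Disjoint D3 S3 := by
    rw [Finset.disjoint_left]
    intro z h1 h2'
    rw [hD3] at h1; rw [hS3] at h2'
    have a1 := (Finset.mem_filter.mp h1).2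
    have a2 := (Finset.mem_filter.mp h2').2
    nlinarith
  have hb2 : (D2.card : ℝ) + (S2.card : ℝ) ≤ m2 := by
    have h1 : (D2 ∪ S2).card = D2.card + S2.card := Finset.card_union_of_disjoint hdisj2
    have h2' : (D2 ∪ S2) ⊆ V2 := by
      rw [hD2, hS2]
      exact Finset.union_subset (Finset.filter_subset _ _) (Finset.filter_subset _ _)
    rw [hm2]
    exact_mod_cast h1 ▸ Finset.card_le_card h2'
  have hb3 : (D3.card : ℝ) + (S3.card : ℝ) ≤ m3 := by
    have h1 : (D3 ∪ S3).card = D3.card + S3.card := Finset.card_union_of_disjoint hdisj3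
    have h2' : (D3 ∪ S3) ⊆ V3 := by
      rw [hD3, hS3]
      exact Finset.union_subset (Finset.filter_subset _ _) (Finset.filter_subset _ _)
    rw [hm3]
    exact_mod_cast h1 ▸ Finset.card_le_card h2'
  exact perx_arith ε m2 m3 ℓ _ _ _ _ hε0 hm2p hm3p L2 L3 R2 R3 X23 X32 hb2 hb3
    (Nat.cast_nonneg _) (Nat.cast_nonneg _) (Nat.cast_nonneg _) (Nat.cast_nonneg _)

set_option maxHeartbeats 12000000 in
theorem stmt_7 {α : Type*} [DecidableEq α] (ε : ℝ) (hε0 : 0 < ε) (hε1 : ε < 1/100)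
    (V1 V2 V3 : Finset α)
    (h12 : Disjoint V1 V2) (h13 : Disjoint V1 V3) (h23 : Disjoint V2 V3)
    (E : α → α → α → Prop)
    (hyp12 : (1 - 3 * Real.sqrt ε) * ((V1.card : ℝ) * (V2.card : ℝ)) ≤
      (((V1 ×ˢ V2).filter fun p =>
        ((V3.filter fun z => E p.1 p.2 z).card : ℝ) / (V3.card : ℝ) < ε ∨
        1 - ε < ((V3.filter fun z => E p.1 p.2 z).card : ℝ) / (V3.card : ℝ)).card : ℝ))
    (hyp13 : (1 - 3 * Real.sqrt ε) * ((V1.card : ℝ) * (V3.card : ℝ)) ≤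
      (((V1 ×ˢ V3).filter fun p =>
        ((V2.filter fun y => E p.1 y p.2).card : ℝ) / (V2.card : ℝ) < ε ∨
        1 - ε < ((V2.filter fun y => E p.1 y p.2).card : ℝ) / (V2.card : ℝ)).card : ℝ))
    (hyp23 : (1 - 3 * Real.sqrt ε) * ((V2.card : ℝ) * (V3.card : ℝ)) ≤
      (((V2 ×ˢ V3).filter fun p =>
        ((V1.filter fun x => E x p.1 p.2).card : ℝ) / (V1.card : ℝ) < ε ∨
        1 - ε < ((V1.filter fun x => E x p.1 p.2).card : ℝ) / (V1.card : ℝ)).card : ℝ)) :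
    ∃ V1' ⊆ V1, (1 - 2 * Real.sqrt ε) * (V1.card : ℝ) ≤ (V1'.card : ℝ) ∧
      ∀ x ∈ V1',
        (1 - 2 * ε ^ ((1:ℝ)/4)) * ((V2.card : ℝ) * (V3.card : ℝ)) ≤
            (((V2 ×ˢ V3).filter fun p => E x p.1 p.2).card : ℝ) ∨
        (((V2 ×ˢ V3).filter fun p => E x p.1 p.2).card : ℝ) ≤
            2 * ε ^ ((1:ℝ)/4) * ((V2.card : ℝ) * (V3.card : ℝ)) := by
  classical
  have hq0 : (0:ℝ) < ε ^ ((1:ℝ)/4) := Real.rpow_pos_of_pos hε0 _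
  have hs_eq : Real.sqrt ε = (ε ^ ((1:ℝ)/4)) ^ 2 := by
    rw [← Real.rpow_natCast (ε ^ ((1:ℝ)/4)) 2, ← Real.rpow_mul hε0.le, Real.sqrt_eq_rpow]
    norm_num
  have hε_eq : ε = (ε ^ ((1:ℝ)/4)) ^ 4 := by
    nth_rewrite 1 [show ε = ε ^ (1:ℝ) by rw [Real.rpow_one]]
    rw [← Real.rpow_natCast (ε ^ ((1:ℝ)/4)) 4, ← Real.rpow_mul hε0.le]
    norm_num
  have hsqnn : (0:ℝ) ≤ Real.sqrt ε := Real.sqrt_nonneg ε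
  -- trivial cases
  rcases Finset.eq_empty_or_nonempty V1 with hV1e | hV1ne
  · refine ⟨∅, Finset.empty_subset _, ?_, by simp⟩
    simp [hV1e]
  rcases Finset.eq_empty_or_nonempty V2 with hV2e | hV2ne
  · refine ⟨V1, Finset.Subset.rfl, ?_, ?_⟩
    · have : (0:ℝ) ≤ (V1.card : ℝ) := Nat.cast_nonneg _
      nlinarith
    · intro x _
      right
      have he : (V2 ×ˢ V3) = (∅ : Finset (α × α)) := by simp [hV2e]
      rw [he]
      simp only [Finset.filter_empty, Finset.card_empty, Nat.cast_zero]
      exact mul_nonneg (mul_nonneg zero_le_two hq0.le) (mul_nonneg (Nat.cast_nonneg _) (Nat.cast_nonneg _))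
  rcases Finset.eq_empty_or_nonempty V3 with hV3e | hV3ne
  · refine ⟨V1, Finset.Subset.rfl, ?_, ?_⟩
    · have : (0:ℝ) ≤ (V1.card : ℝ) := Nat.cast_nonneg _
      nlinarith
    · intro x _
      right
      have he : (V2 ×ˢ V3) = (∅ : Finset (α × α)) := by simp [hV3e]
      rw [he]
      simp only [Finset.filter_empty, Finset.card_empty, Nat.cast_zero]
      exact mul_nonneg (mul_nonneg zero_le_two hq0.le) (mul_nonneg (Nat.cast_nonneg _) (Nat.cast_nonneg _))
  by_cases hqbig : (1:ℝ)/4 ≤ ε ^ ((1:ℝ)/4)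
  · refine ⟨V1, Finset.Subset.rfl, ?_, ?_⟩
    · have : (0:ℝ) ≤ (V1.card : ℝ) := Nat.cast_nonneg _
      nlinarith
    · intro x _
      rcases le_or_gt ((((V2 ×ˢ V3).filter fun p => E x p.1 p.2).card : ℝ))
        (2 * ε ^ ((1:ℝ)/4) * ((V2.card : ℝ) * (V3.card : ℝ))) with h | h
      · exact Or.inr h
      · left
        have hm0 : (0:ℝ) ≤ (V2.card:ℝ) * (V3.card:ℝ) := by exact mul_nonneg (Nat.cast_nonneg _) (Nat.cast_nonneg _)
        nlinarith
  push_neg at hqbig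
  -- main case
  set s := Real.sqrt ε with hsdef
  set q := ε ^ ((1:ℝ)/4) with hqdef
  have hn1p : (0:ℝ) < (V1.card : ℝ) := by exact_mod_cast Finset.card_pos.mpr hV1ne
  have hn2p : (0:ℝ) < (V2.card : ℝ) := by exact_mod_cast Finset.card_pos.mpr hV2ne
  have hn3p : (0:ℝ) < (V3.card : ℝ) := by exact_mod_cast Finset.card_pos.mpr hV3ne
  have hmp : (0:ℝ) < (V2.card : ℝ) * (V3.card : ℝ) := mul_pos hn2p hn3p
  have hε2 : ε < 1/2 := by linarith
  -- global dense/sparse pair sets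
  set DD := (V2 ×ˢ V3).filter
    (fun p => (1-ε) * (V1.card:ℝ) < ((V1.filter fun x => E x p.1 p.2).card : ℝ)) with hDDdef
  set SS := (V2 ×ˢ V3).filter
    (fun p => ((V1.filter fun x => E x p.1 p.2).card : ℝ) < ε * (V1.card:ℝ)) with hSSdef
  have hunion : (V2 ×ˢ V3).filter (fun p =>
      ((V1.filter fun x => E x p.1 p.2).card : ℝ) / (V1.card:ℝ) < ε ∨
      1 - ε < ((V1.filter fun x => E x p.1 p.2).card : ℝ) / (V1.card:ℝ)) ⊆ SS ∪ DD := by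
    intro p hp
    rw [Finset.mem_filter] at hp
    rw [Finset.mem_union, hSSdef, hDDdef, Finset.mem_filter, Finset.mem_filter]
    rcases hp.2 with h | h
    · left; exact ⟨hp.1, by rwa [div_lt_iff₀ hn1p] at h⟩
    · right; exact ⟨hp.1, by rwa [lt_div_iff₀ hn1p] at h⟩
  have H23 : (1 - 3*s) * ((V2.card:ℝ)*(V3.card:ℝ)) ≤ (DD.card : ℝ) + (SS.card : ℝ) := by
    refine hyp23.trans ?_
    have h1 := Finset.card_le_card hunion
    have h2 := Finset.card_union_le SS DD
    have h3 : ((V2 ×ˢ V3).filter (fun p =>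
        ((V1.filter fun x => E x p.1 p.2).card : ℝ) / (V1.card:ℝ) < ε ∨
        1 - ε < ((V1.filter fun x => E x p.1 p.2).card : ℝ) / (V1.card:ℝ))).card
        ≤ DD.card + SS.card := le_trans h1 (h2.trans (Nat.le_of_eq (Nat.add_comm _ _)))
    exact_mod_cast h3
  have hdisjDS : Disjoint DD SS := by
    rw [Finset.disjoint_left]
    intro p hp1 hp2
    rw [hDDdef, Finset.mem_filter] at hp1
    rw [hSSdef, Finset.mem_filter] at hp2
    nlinarith [hp1.2, hp2.2]
  have hDSle : (DD.card:ℝ) + (SS.card:ℝ) ≤ (V2.card:ℝ)*(V3.card:ℝ) := by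
    have h1 : (DD ∪ SS).card = DD.card + SS.card := Finset.card_union_of_disjoint hdisjDS
    have h2 : DD ∪ SS ⊆ V2 ×ˢ V3 := by
      rw [hDDdef, hSSdef]
      exact Finset.union_subset (Finset.filter_subset _ _) (Finset.filter_subset _ _)
    have h3 : DD.card + SS.card ≤ V2.card * V3.card := by
      rw [← h1, ← Finset.card_product]
      exact Finset.card_le_card h2
    exact_mod_cast h3
  have hDDnn : (0:ℝ) ≤ (DD.card : ℝ) := Nat.cast_nonneg _
  have hSSnn : (0:ℝ) ≤ (SS.card : ℝ) := Nat.cast_nonneg _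
  -- deviation functions
  set gL : α → ℝ := fun x => ((DD.filter fun p => ¬ E x p.1 p.2).card : ℝ) with hgLdef
  set gH : α → ℝ := fun x => ((SS.filter fun p => E x p.1 p.2).card : ℝ) with hgHdef
  have DevL : ∑ x ∈ V1, gL x ≤ ε * (V1.card:ℝ) * (DD.card:ℝ) := by
    have hswap : ∑ x ∈ V1, (DD.filter fun p => ¬ E x p.1 p.2).card
        = ∑ p ∈ DD, (V1.filter fun x => ¬ E x p.1 p.2).card := by
      simp only [Finset.card_filter]
      exact Finset.sum_comm
    have hsum : ∑ x ∈ V1, gL x = ∑ p ∈ DD, ((V1.filter fun x => ¬ E x p.1 p.2).card : ℝ) := by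
      simp only [hgLdef]
      exact_mod_cast congrArg (Nat.cast : ℕ → ℝ) hswap
    rw [hsum]
    have hbd : ∀ p ∈ DD, ((V1.filter fun x => ¬ E x p.1 p.2).card : ℝ) ≤ ε * (V1.card:ℝ) := by
      intro p hp
      rw [hDDdef, Finset.mem_filter] at hp
      have h := Finset.card_filter_add_card_filter_not
        (s := V1) (p := fun x => E x p.1 p.2)
      have h' : ((V1.filter fun x => E x p.1 p.2).card : ℝ)
          + ((V1.filter fun x => ¬ E x p.1 p.2).card : ℝ) = (V1.card : ℝ) := by
        exact_mod_cast congrArg (Nat.cast : ℕ → ℝ) h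
      linarith [hp.2]
    calc ∑ p ∈ DD, ((V1.filter fun x => ¬ E x p.1 p.2).card : ℝ)
        ≤ (DD.card : ℝ) * (ε * (V1.card:ℝ)) := sum_le_bound DD _ _ hbd
    _ = ε * (V1.card:ℝ) * (DD.card:ℝ) := by ring
  have DevH : ∑ x ∈ V1, gH x ≤ ε * (V1.card:ℝ) * (SS.card:ℝ) := by
    have hswap : ∑ x ∈ V1, (SS.filter fun p => E x p.1 p.2).card
        = ∑ p ∈ SS, (V1.filter fun x => E x p.1 p.2).card := by
      simp only [Finset.card_filter]
      exact Finset.sum_comm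
    have hsum : ∑ x ∈ V1, gH x = ∑ p ∈ SS, ((V1.filter fun x => E x p.1 p.2).card : ℝ) := by
      simp only [hgHdef]
      exact_mod_cast congrArg (Nat.cast : ℕ → ℝ) hswap
    rw [hsum]
    have hbd : ∀ p ∈ SS, ((V1.filter fun x => E x p.1 p.2).card : ℝ) ≤ ε * (V1.card:ℝ) := by
      intro p hp
      rw [hSSdef, Finset.mem_filter] at hp
      linarith [hp.2]
    calc ∑ p ∈ SS, ((V1.filter fun x => E x p.1 p.2).card : ℝ)
        ≤ (SS.card : ℝ) * (ε * (V1.card:ℝ)) := sum_le_bound SS _ _ hbd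
    _ = ε * (V1.card:ℝ) * (SS.card:ℝ) := by ring
  -- bad-pair count functions from hyp12/hyp13
  set f2 : α → ℝ := fun x =>
    ((V2.filter fun y => (1-ε) * (V3.card:ℝ) < ((V3.filter fun z => E x y z).card : ℝ)).card : ℝ)
    + ((V2.filter fun y => ((V3.filter fun z => E x y z).card : ℝ) < ε * (V3.card:ℝ)).card : ℝ)
    with hf2def
  set f3 : α → ℝ := fun x =>
    ((V3.filter fun z => (1-ε) * (V2.card:ℝ) < ((V2.filter fun y => E x y z).card : ℝ)).card : ℝ)
    + ((V3.filter fun z => ((V2.filter fun y => E x y z).card : ℝ) < ε * (V2.card:ℝ)).card : ℝ)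
    with hf3def
  have H12 : (1 - 3*s) * ((V1.card:ℝ) * (V2.card:ℝ)) ≤ ∑ x ∈ V1, f2 x := by
    refine hyp12.trans ?_
    have e12 : (((V1 ×ˢ V2).filter fun p =>
        ((V3.filter fun z => E p.1 p.2 z).card : ℝ) / (V3.card : ℝ) < ε ∨
        1 - ε < ((V3.filter fun z => E p.1 p.2 z).card : ℝ) / (V3.card : ℝ)).card : ℝ)
        = ∑ x ∈ V1, ((V2.filter fun y =>
            ((V3.filter fun z => E x y z).card : ℝ) / (V3.card : ℝ) < ε ∨
            1 - ε < ((V3.filter fun z => E x y z).card : ℝ) / (V3.card : ℝ)).card : ℝ) :=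
      card_filter_prod_left V1 V2 (fun a b =>
        ((V3.filter fun z => E a b z).card : ℝ) / (V3.card : ℝ) < ε ∨
        1 - ε < ((V3.filter fun z => E a b z).card : ℝ) / (V3.card : ℝ))
    rw [e12]
    refine Finset.sum_le_sum ?_
    intro x _
    simp only [hf2def]
    have hsub : (V2.filter fun y =>
        ((V3.filter fun z => E x y z).card : ℝ) / (V3.card : ℝ) < ε ∨
        1 - ε < ((V3.filter fun z => E x y z).card : ℝ) / (V3.card : ℝ)) ⊆
        (V2.filter fun y => (1-ε) * (V3.card:ℝ) < ((V3.filter fun z => E x y z).card : ℝ))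
        ∪ (V2.filter fun y => ((V3.filter fun z => E x y z).card : ℝ) < ε * (V3.card:ℝ)) := by
      intro y hy
      rw [Finset.mem_filter] at hy
      rw [Finset.mem_union, Finset.mem_filter, Finset.mem_filter]
      rcases hy.2 with h | h
      · right; exact ⟨hy.1, by rwa [div_lt_iff₀ hn3p] at h⟩
      · left; exact ⟨hy.1, by rwa [lt_div_iff₀ hn3p] at h⟩
    have h1 := Finset.card_le_card hsub
    have h2 := Finset.card_union_le
      (V2.filter fun y => (1-ε) * (V3.card:ℝ) < ((V3.filter fun z => E x y z).card : ℝ))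
      (V2.filter fun y => ((V3.filter fun z => E x y z).card : ℝ) < ε * (V3.card:ℝ))
    have := le_trans h1 h2
    exact_mod_cast this
  have H13 : (1 - 3*s) * ((V1.card:ℝ) * (V3.card:ℝ)) ≤ ∑ x ∈ V1, f3 x := by
    refine hyp13.trans ?_
    have e13 : (((V1 ×ˢ V3).filter fun p =>
        ((V2.filter fun y => E p.1 y p.2).card : ℝ) / (V2.card : ℝ) < ε ∨
        1 - ε < ((V2.filter fun y => E p.1 y p.2).card : ℝ) / (V2.card : ℝ)).card : ℝ)
        = ∑ x ∈ V1, ((V3.filter fun z =>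
            ((V2.filter fun y => E x y z).card : ℝ) / (V2.card : ℝ) < ε ∨
            1 - ε < ((V2.filter fun y => E x y z).card : ℝ) / (V2.card : ℝ)).card : ℝ) :=
      card_filter_prod_left V1 V3 (fun a b =>
        ((V2.filter fun y => E a y b).card : ℝ) / (V2.card : ℝ) < ε ∨
        1 - ε < ((V2.filter fun y => E a y b).card : ℝ) / (V2.card : ℝ))
    rw [e13]
    refine Finset.sum_le_sum ?_
    intro x _
    simp only [hf3def]
    have hsub : (V3.filter fun z =>
        ((V2.filter fun y => E x y z).card : ℝ) / (V2.card : ℝ) < ε ∨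
        1 - ε < ((V2.filter fun y => E x y z).card : ℝ) / (V2.card : ℝ)) ⊆
        (V3.filter fun z => (1-ε) * (V2.card:ℝ) < ((V2.filter fun y => E x y z).card : ℝ))
        ∪ (V3.filter fun z => ((V2.filter fun y => E x y z).card : ℝ) < ε * (V2.card:ℝ)) := by
      intro z hz
      rw [Finset.mem_filter] at hz
      rw [Finset.mem_union, Finset.mem_filter, Finset.mem_filter]
      rcases hz.2 with h | h
      · right; exact ⟨hz.1, by rwa [div_lt_iff₀ hn2p] at h⟩
      · left; exact ⟨hz.1, by rwa [lt_div_iff₀ hn2p] at h⟩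
    have h1 := Finset.card_le_card hsub
    have h2 := Finset.card_union_le
      (V3.filter fun z => (1-ε) * (V2.card:ℝ) < ((V2.filter fun y => E x y z).card : ℝ))
      (V3.filter fun z => ((V2.filter fun y => E x y z).card : ℝ) < ε * (V2.card:ℝ))
    have := le_trans h1 h2
    exact_mod_cast this
  -- per-x comparison of link with DD and SS
  have hDD_le : ∀ x : α, (DD.card:ℝ)
      ≤ (((V2 ×ˢ V3).filter fun p => E x p.1 p.2).card : ℝ) + gL x := by
    intro x
    have h := Finset.card_filter_add_card_filter_not
      (s := DD) (p := fun p => E x p.1 p.2)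
    have h' : ((DD.filter fun p => E x p.1 p.2).card : ℝ)
        + ((DD.filter fun p => ¬ E x p.1 p.2).card : ℝ) = (DD.card : ℝ) := by
      exact_mod_cast congrArg (Nat.cast : ℕ → ℝ) h
    have hsub : DD.filter (fun p => E x p.1 p.2) ⊆ (V2 ×ˢ V3).filter (fun p => E x p.1 p.2) := by
      refine Finset.filter_subset_filter _ ?_
      rw [hDDdef]; exact Finset.filter_subset _ _
    have h2 : ((DD.filter fun p => E x p.1 p.2).card : ℝ)
        ≤ (((V2 ×ˢ V3).filter fun p => E x p.1 p.2).card : ℝ) := by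
      exact_mod_cast Finset.card_le_card hsub
    simp only [hgLdef]
    linarith
  have hSS_le : ∀ x : α, (SS.card:ℝ)
      ≤ ((V2.card:ℝ)*(V3.card:ℝ) - (((V2 ×ˢ V3).filter fun p => E x p.1 p.2).card : ℝ)) + gH x := by
    intro x
    have h := Finset.card_filter_add_card_filter_not
      (s := SS) (p := fun p => E x p.1 p.2)
    have h' : ((SS.filter fun p => E x p.1 p.2).card : ℝ)
        + ((SS.filter fun p => ¬ E x p.1 p.2).card : ℝ) = (SS.card : ℝ) := by
      exact_mod_cast congrArg (Nat.cast : ℕ → ℝ) h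
    have hsub : SS.filter (fun p => ¬ E x p.1 p.2) ⊆ (V2 ×ˢ V3).filter (fun p => ¬ E x p.1 p.2) := by
      refine Finset.filter_subset_filter _ ?_
      rw [hSSdef]; exact Finset.filter_subset _ _
    have hply := Finset.card_filter_add_card_filter_not
      (s := V2 ×ˢ V3) (p := fun p => E x p.1 p.2)
    have hply' : (((V2 ×ˢ V3).filter fun p => E x p.1 p.2).card : ℝ)
        + (((V2 ×ˢ V3).filter fun p => ¬ E x p.1 p.2).card : ℝ)
        = (V2.card:ℝ)*(V3.card:ℝ) := by
      have hcp : ((V2 ×ˢ V3).card : ℝ) = (V2.card:ℝ)*(V3.card:ℝ) := by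
        rw [Finset.card_product]; push_cast; ring
      rw [← hcp]
      exact_mod_cast congrArg (Nat.cast : ℕ → ℝ) hply
    have h2 : ((SS.filter fun p => ¬ E x p.1 p.2).card : ℝ)
        ≤ (((V2 ×ˢ V3).filter fun p => ¬ E x p.1 p.2).card : ℝ) := by
      exact_mod_cast Finset.card_le_card hsub
    simp only [hgHdef]
    linarith
  -- per-x key inequality, summed form
  have PER : ∀ x ∈ V1, 2 * min (DD.card:ℝ) (SS.card:ℝ) ≤
      ((V2.card:ℝ) - f2 x) * (V3.card:ℝ) + ((V3.card:ℝ) - f3 x) * (V2.card:ℝ)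
        + 6*ε*((V2.card:ℝ)*(V3.card:ℝ)) + 2 * gL x + 2 * gH x := by
    intro x _
    have hkey := key_perx hε0 hε2 V2 V3 hV2ne hV3ne (fun y z => E x y z)
    have hgL0 : 0 ≤ gL x := by simp only [hgLdef]; exact Nat.cast_nonneg _
    have hgH0 : 0 ≤ gH x := by simp only [hgHdef]; exact Nat.cast_nonneg _
    have hmin : min (DD.card:ℝ) (SS.card:ℝ) - gL x - gH x ≤
        min ((((V2 ×ˢ V3).filter fun p => E x p.1 p.2).card : ℝ))
          ((V2.card:ℝ)*(V3.card:ℝ) - (((V2 ×ˢ V3).filter fun p => E x p.1 p.2).card : ℝ)) := by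
      refine le_min ?_ ?_
      · linarith [hDD_le x, min_le_left (DD.card:ℝ) (SS.card:ℝ)]
      · linarith [hSS_le x, min_le_right (DD.card:ℝ) (SS.card:ℝ)]
    have hf2x : f2 x = ((V2.filter fun y =>
          (1-ε) * (V3.card:ℝ) < ((V3.filter fun z => E x y z).card : ℝ)).card : ℝ)
        + ((V2.filter fun y =>
          ((V3.filter fun z => E x y z).card : ℝ) < ε * (V3.card:ℝ)).card : ℝ) := by
      simp only [hf2def]
    have hf3x : f3 x = ((V3.filter fun z =>
          (1-ε) * (V2.card:ℝ) < ((V2.filter fun y => E x y z).card : ℝ)).card : ℝ)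
        + ((V3.filter fun z =>
          ((V2.filter fun y => E x y z).card : ℝ) < ε * (V2.card:ℝ)).card : ℝ) := by
      simp only [hf3def]
    rw [hf2x, hf3x]
    linarith [hkey, hmin]
  -- summing up
  have SUM : (V1.card:ℝ) * (2 * min (DD.card:ℝ) (SS.card:ℝ))
      ≤ (6*s + 8*ε) * ((V1.card:ℝ) * ((V2.card:ℝ)*(V3.card:ℝ))) := by
    have h0 : (V1.card:ℝ) * (2 * min (DD.card:ℝ) (SS.card:ℝ))
        = ∑ _x ∈ V1, 2 * min (DD.card:ℝ) (SS.card:ℝ) := by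
      rw [Finset.sum_const, nsmul_eq_mul]
    rw [h0]
    have h1 := Finset.sum_le_sum PER
    have h2 : ∑ x ∈ V1, (((V2.card:ℝ) - f2 x) * (V3.card:ℝ)
          + ((V3.card:ℝ) - f3 x) * (V2.card:ℝ)
          + 6*ε*((V2.card:ℝ)*(V3.card:ℝ)) + 2 * gL x + 2 * gH x)
        = (∑ x ∈ V1, ((V2.card:ℝ) - f2 x)) * (V3.card:ℝ)
          + (∑ x ∈ V1, ((V3.card:ℝ) - f3 x)) * (V2.card:ℝ)
          + (V1.card:ℝ) * (6*ε*((V2.card:ℝ)*(V3.card:ℝ)))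
          + 2 * (∑ x ∈ V1, gL x) + 2 * (∑ x ∈ V1, gH x) := by
      rw [Finset.sum_add_distrib, Finset.sum_add_distrib, Finset.sum_add_distrib,
        Finset.sum_add_distrib, ← Finset.sum_mul, ← Finset.sum_mul,
        Finset.sum_const, nsmul_eq_mul, ← Finset.mul_sum, ← Finset.mul_sum]
    rw [h2] at h1
    have hA : ∑ x ∈ V1, ((V2.card:ℝ) - f2 x) ≤ 3*s*((V1.card:ℝ)*(V2.card:ℝ)) := by
      have : ∑ x ∈ V1, ((V2.card:ℝ) - f2 x)
          = (V1.card:ℝ)*(V2.card:ℝ) - ∑ x ∈ V1, f2 x := by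
        rw [Finset.sum_sub_distrib, Finset.sum_const, nsmul_eq_mul]
      rw [this]; linarith [H12]
    have hB : ∑ x ∈ V1, ((V3.card:ℝ) - f3 x) ≤ 3*s*((V1.card:ℝ)*(V3.card:ℝ)) := by
      have : ∑ x ∈ V1, ((V3.card:ℝ) - f3 x)
          = (V1.card:ℝ)*(V3.card:ℝ) - ∑ x ∈ V1, f3 x := by
        rw [Finset.sum_sub_distrib, Finset.sum_const, nsmul_eq_mul]
      rw [this]; linarith [H13]
    have hA' : (∑ x ∈ V1, ((V2.card:ℝ) - f2 x)) * (V3.card:ℝ)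
        ≤ 3*s*((V1.card:ℝ)*(V2.card:ℝ)) * (V3.card:ℝ) :=
      mul_le_mul_of_nonneg_right hA hn3p.le
    have hB' : (∑ x ∈ V1, ((V3.card:ℝ) - f3 x)) * (V2.card:ℝ)
        ≤ 3*s*((V1.card:ℝ)*(V3.card:ℝ)) * (V2.card:ℝ) :=
      mul_le_mul_of_nonneg_right hB hn2p.le
    have hC : ε * (V1.card:ℝ) * (DD.card:ℝ) ≤ ε * (V1.card:ℝ) * ((V2.card:ℝ)*(V3.card:ℝ)) := by
      apply mul_le_mul_of_nonneg_left _ (by exact mul_nonneg hε0.le (Nat.cast_nonneg _) : (0:ℝ) ≤ ε * (V1.card:ℝ))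
      linarith
    have hD : ε * (V1.card:ℝ) * (SS.card:ℝ) ≤ ε * (V1.card:ℝ) * ((V2.card:ℝ)*(V3.card:ℝ)) := by
      apply mul_le_mul_of_nonneg_left _ (by exact mul_nonneg hε0.le (Nat.cast_nonneg _) : (0:ℝ) ≤ ε * (V1.card:ℝ))
      linarith
    nlinarith [h1, hA', hB', DevL, DevH, hC, hD]
  have hW : min (DD.card:ℝ) (SS.card:ℝ) ≤ (3*s + 4*ε) * ((V2.card:ℝ)*(V3.card:ℝ)) := by
    nlinarith [SUM, hn1p]
  -- the good set
  refine ⟨V1.filter (fun x =>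
    (1 - 2*q) * ((V2.card:ℝ)*(V3.card:ℝ)) ≤ (((V2 ×ˢ V3).filter fun p => E x p.1 p.2).card : ℝ)
    ∨ (((V2 ×ˢ V3).filter fun p => E x p.1 p.2).card : ℝ) ≤ 2*q*((V2.card:ℝ)*(V3.card:ℝ))),
    Finset.filter_subset _ _, ?_, ?_⟩
  swap
  · intro x hx
    exact (Finset.mem_filter.mp hx).2
  -- size bound
  have e1 : q^2 < q/4 := by nlinarith [hq0, hqbig]
  have e3 : q^4 < q/64 := by nlinarith [hq0, hqbig, e1, sq_nonneg q, sq_nonneg (q^2)]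
  have p3 : 0 < q^3 := pow_pos hq0 3
  have e4 : q^4 < (1/4)*q^3 := by nlinarith [p3, hqbig]
  have e0 : q^3 < 1/64 := by nlinarith [hq0, hqbig, e1]
  have e5 : q^6 < (1/64)*q^3 := by nlinarith [e0, p3]
  have hτpos : (0:ℝ) < 2*q - 6*s - 4*ε := by
    rw [hs_eq, hε_eq]
    linarith [e1, e3, hq0]
  have hnum : ε ≤ 2*s*(2*q - 6*s - 4*ε) := by
    rw [hs_eq, hε_eq]
    nlinarith [e4, e5]
  set Good := V1.filter (fun x =>
    (1 - 2*q) * ((V2.card:ℝ)*(V3.card:ℝ)) ≤ (((V2 ×ˢ V3).filter fun p => E x p.1 p.2).card : ℝ)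
    ∨ (((V2 ×ˢ V3).filter fun p => E x p.1 p.2).card : ℝ) ≤ 2*q*((V2.card:ℝ)*(V3.card:ℝ)))
    with hGooddef
  set Bad := V1.filter (fun x => ¬ (
    (1 - 2*q) * ((V2.card:ℝ)*(V3.card:ℝ)) ≤ (((V2 ×ˢ V3).filter fun p => E x p.1 p.2).card : ℝ)
    ∨ (((V2 ×ˢ V3).filter fun p => E x p.1 p.2).card : ℝ) ≤ 2*q*((V2.card:ℝ)*(V3.card:ℝ))))
    with hBaddef
  have hsplit : Good.card + Bad.card = V1.card := by
    rw [hGooddef, hBaddef]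
    exact Finset.card_filter_add_card_filter_not _
  have hBadmem : ∀ x ∈ Bad,
      2*q*((V2.card:ℝ)*(V3.card:ℝ)) < (((V2 ×ˢ V3).filter fun p => E x p.1 p.2).card : ℝ)
      ∧ (((V2 ×ˢ V3).filter fun p => E x p.1 p.2).card : ℝ)
        < (1 - 2*q) * ((V2.card:ℝ)*(V3.card:ℝ)) := by
    intro x hx
    rw [hBaddef, Finset.mem_filter] at hx
    push_neg at hx
    exact ⟨hx.2.2, hx.2.1⟩
  have hBadsub : Bad ⊆ V1 := by rw [hBaddef]; exact Finset.filter_subset _ _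
  have hBadcard : (Bad.card : ℝ) ≤ 2*s*(V1.card:ℝ) := by
    have hBpair : ((V2.card:ℝ)*(V3.card:ℝ)) - (DD.card:ℝ) - (SS.card:ℝ)
        ≤ 3*s*((V2.card:ℝ)*(V3.card:ℝ)) := by nlinarith [H23, hmp]
    rcases le_total (DD.card:ℝ) (SS.card:ℝ) with hmn | hmn
    · -- DD is small
      have hDDsmall : (DD.card:ℝ) ≤ (3*s + 4*ε) * ((V2.card:ℝ)*(V3.card:ℝ)) := by
        rw [min_eq_left hmn] at hW; exact hW
      have hτ : ∀ x ∈ Bad, (2*q - 6*s - 4*ε) * ((V2.card:ℝ)*(V3.card:ℝ)) ≤ gH x := by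
        intro x hx
        have h1 := (hBadmem x hx).1
        have h2 := hSS_le x
        nlinarith [h1, h2, hBpair, hDDsmall]
      have hmkv := markov V1 Bad hBadsub gH
        (fun x _ => by simp only [hgHdef]; exact Nat.cast_nonneg _)
        ((2*q - 6*s - 4*ε) * ((V2.card:ℝ)*(V3.card:ℝ))) hτ
      have hch : (Bad.card:ℝ) * ((2*q - 6*s - 4*ε) * ((V2.card:ℝ)*(V3.card:ℝ)))
          ≤ ε * (V1.card:ℝ) * ((V2.card:ℝ)*(V3.card:ℝ)) := by
        calc (Bad.card:ℝ) * ((2*q - 6*s - 4*ε) * ((V2.card:ℝ)*(V3.card:ℝ)))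
            ≤ ∑ x ∈ V1, gH x := hmkv
        _ ≤ ε * (V1.card:ℝ) * (SS.card:ℝ) := DevH
        _ ≤ ε * (V1.card:ℝ) * ((V2.card:ℝ)*(V3.card:ℝ)) := by
            apply mul_le_mul_of_nonneg_left _ (by exact mul_nonneg hε0.le (Nat.cast_nonneg _) : (0:ℝ) ≤ ε * (V1.card:ℝ))
            linarith
      have hch2 : (Bad.card:ℝ) * (2*q - 6*s - 4*ε) ≤ ε * (V1.card:ℝ) := by
        rw [← mul_le_mul_iff_left₀ hmp]
        nlinarith [hch]
      nlinarith [hch2, hnum, hτpos, hn1p, (show (0:ℝ) ≤ (Bad.card:ℝ) from Nat.cast_nonneg _)]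
    · -- SS is small
      have hSSsmall : (SS.card:ℝ) ≤ (3*s + 4*ε) * ((V2.card:ℝ)*(V3.card:ℝ)) := by
        rw [min_eq_right hmn] at hW; exact hW
      have hDDbig : (1 - 6*s - 4*ε) * ((V2.card:ℝ)*(V3.card:ℝ)) ≤ (DD.card:ℝ) := by
        nlinarith [hBpair, hSSsmall]
      have hτ : ∀ x ∈ Bad, (2*q - 6*s - 4*ε) * ((V2.card:ℝ)*(V3.card:ℝ)) ≤ gL x := by
        intro x hx
        have h1 := (hBadmem x hx).2
        have h2 := hDD_le x
        nlinarith [h1, h2, hDDbig]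
      have hmkv := markov V1 Bad hBadsub gL
        (fun x _ => by simp only [hgLdef]; exact Nat.cast_nonneg _)
        ((2*q - 6*s - 4*ε) * ((V2.card:ℝ)*(V3.card:ℝ))) hτ
      have hch : (Bad.card:ℝ) * ((2*q - 6*s - 4*ε) * ((V2.card:ℝ)*(V3.card:ℝ)))
          ≤ ε * (V1.card:ℝ) * ((V2.card:ℝ)*(V3.card:ℝ)) := by
        calc (Bad.card:ℝ) * ((2*q - 6*s - 4*ε) * ((V2.card:ℝ)*(V3.card:ℝ)))
            ≤ ∑ x ∈ V1, gL x := hmkv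
        _ ≤ ε * (V1.card:ℝ) * (DD.card:ℝ) := DevL
        _ ≤ ε * (V1.card:ℝ) * ((V2.card:ℝ)*(V3.card:ℝ)) := by
            apply mul_le_mul_of_nonneg_left _ (by exact mul_nonneg hε0.le (Nat.cast_nonneg _) : (0:ℝ) ≤ ε * (V1.card:ℝ))
            linarith
      have hch2 : (Bad.card:ℝ) * (2*q - 6*s - 4*ε) ≤ ε * (V1.card:ℝ) := by
        rw [← mul_le_mul_iff_left₀ hmp]
        nlinarith [hch]
      nlinarith [hch2, hnum, hτpos, hn1p, (show (0:ℝ) ≤ (Bad.card:ℝ) from Nat.cast_nonneg _)]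
  have hGB : (Good.card : ℝ) = (V1.card:ℝ) - (Bad.card:ℝ) := by
    have := congrArg (Nat.cast : ℕ → ℝ) hsplit
    push_cast at this
    linarith
  rw [hGB]
  linarith [hBadcard]
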